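/- Let h = (h₁, h₂) : ℤ² → ℝ² be discrete harmonic, i.e. h(m+1,n) + h(m−1,n) + h(m,n+1) + h(m,n−1) = 4·h(m,n) for all (m,n) ∈ ℤ². Then there exists a function F : ℤ² → ℝ satisfying, for all (m,n) ∈ ℤ²: F(m+1,n) − F(m,n) = −det[h(m,n−1), h(m,n)] and F(m,n+1) − F(m,n) = det[h(m−1,n), h(m,n)]. -/

import Mathlib

noncomputable section

/-- Determinant of the 2×2 matrix with columns `X`, `Y`. -/
def det2 (X Y : ℝ × ℝ) : ℝ := X.1 * Y.2 - X.2 * Y.1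

/-- Cumulative sum over ℤ: `sumTo g (k+1) - sumTo g k = g k`. -/
def sumTo (g : ℤ → ℝ) (k : ℤ) : ℝ :=
  ∑ i ∈ Finset.range k.toNat, g i - ∑ i ∈ Finset.range (-k).toNat, g (-(i : ℤ) - 1)

lemma sumTo_step (g : ℤ → ℝ) (k : ℤ) : sumTo g (k + 1) = sumTo g k + g k := by
  rcases le_or_gt 0 k with hk | hk
  · have h1 : (k + 1).toNat = k.toNat + 1 := by omega
    have h2 : (-k).toNat = 0 := by omega
    have h3 : (-(k + 1)).toNat = 0 := by omega
    have h4 : ((k.toNat : ℤ)) = k := by omega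
    unfold sumTo
    rw [h1, h2, h3, Finset.sum_range_succ, h4]
    simp
  · have h1 : (k + 1).toNat = 0 := by omega
    have h2 : k.toNat = 0 := by omega
    have h3 : (-k).toNat = (-(k + 1)).toNat + 1 := by omega
    have h4 : (-(((-(k + 1)).toNat : ℤ))) - 1 = k := by omega
    unfold sumTo
    rw [h1, h2, h3, Finset.sum_range_succ, h4]
    simp

lemma sumTo_sub (g₁ g₂ : ℤ → ℝ) (k : ℤ) :
    sumTo (fun j => g₁ j - g₂ j) k = sumTo g₁ k - sumTo g₂ k := by
  simp [sumTo, Finset.sum_sub_distrib]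
  ring

lemma sumTo_telescope (f : ℤ → ℝ) (n : ℤ) :
    sumTo (fun j => f (j + 1) - f j) n = f n - f 0 := by
  induction n using Int.induction_on with
  | zero => simp [sumTo]
  | succ k ih => rw [sumTo_step, ih]; ring
  | pred k ih =>
      have := sumTo_step (fun j => f (j + 1) - f j) (-(k : ℤ) - 1)
      have h5 : -(k : ℤ) - 1 + 1 = -(k : ℤ) := by ring
      rw [h5] at this
      rw [this] at ih
      linarith [ih]

theorem statement15 (h : ℤ × ℤ → ℝ × ℝ)
    (hharm : ∀ m n : ℤ,
      h (m + 1, n) + h (m - 1, n) + h (m, n + 1) + h (m, n - 1) = (4 : ℝ) • h (m, n)) :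
    ∃ F : ℤ × ℤ → ℝ, ∀ m n : ℤ,
      F (m + 1, n) - F (m, n) = -det2 (h (m, n - 1)) (h (m, n)) ∧
      F (m, n + 1) - F (m, n) = det2 (h (m - 1, n)) (h (m, n)) := by
  set a : ℤ → ℤ → ℝ := fun m n => -det2 (h (m, n - 1)) (h (m, n)) with ha
  set b : ℤ → ℤ → ℝ := fun m n => det2 (h (m - 1, n)) (h (m, n)) with hb
  have closed : ∀ m n : ℤ, b (m + 1) n - b m n = a m (n + 1) - a m n := by
    intro m n
    have e := hharm m n
    have e1 : (h (m + 1, n)).1 + (h (m - 1, n)).1 + (h (m, n + 1)).1 + (h (m, n - 1)).1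
        = 4 * (h (m, n)).1 := by
      have := congrArg Prod.fst e; simpa using this
    have e2 : (h (m + 1, n)).2 + (h (m - 1, n)).2 + (h (m, n + 1)).2 + (h (m, n - 1)).2
        = 4 * (h (m, n)).2 := by
      have := congrArg Prod.snd e; simpa using this
    simp only [ha, hb, det2]
    have hx : m + 1 - 1 = m := by ring
    have hy : n + 1 - 1 = n := by ring
    rw [hx, hy]
    linear_combination (h (m, n)).1 * e2 - (h (m, n)).2 * e1
  refine ⟨fun p => sumTo (fun i => a i 0) p.1 + sumTo (fun j => b p.1 j) p.2, fun m n => ?_⟩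
  constructor
  · show sumTo (fun i => a i 0) (m + 1) + sumTo (fun j => b (m + 1) j) n
      - (sumTo (fun i => a i 0) m + sumTo (fun j => b m j) n) = a m n
    have h1 : sumTo (fun j => b (m + 1) j) n - sumTo (fun j => b m j) n = a m n - a m 0 := by
      rw [← sumTo_sub]
      have : (fun j => b (m + 1) j - b m j) = fun j => a m (j + 1) - a m j := by
        funext j; exact closed m j
      rw [this, sumTo_telescope]
    rw [sumTo_step]
    linarith [h1]
  · show sumTo (fun i => a i 0) m + sumTo (fun j => b m j) (n + 1)
      - (sumTo (fun i => a i 0) m + sumTo (fun j => b m j) n) = b m n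
    rw [sumTo_step]
    ring
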